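/- Let P be a partition diagram of type (a,b) and Q a partition diagram of type (c,d), and let P ⊗ Q denote the partition diagram of type (a+c, b+d) whose blocks are the blocks of P (under the canonical inclusion of Fin a ⊕ Fin b into Fin (a+c) ⊕ Fin (b+d) as the first a, resp. first b, coordinates) together with the blocks of Q (under the complementary inclusion). Then, under the canonical isomorphisms V^{⊗(a+c)} ≅ V^{⊗a} ⊗ V^{⊗c} and V^{⊗(b+d)} ≅ V^{⊗b} ⊗ V^{⊗d}, one has T_{P ⊗ Q} = T_P ⊗ T_Q. -/

import Mathlib

open scoped Classical

/-- A partition diagram of type `(a,b)`: a set partition of `Fin a ⊕ Fin b`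
into nonempty blocks. -/
abbrev PartitionDiagram (a b : ℕ) :=
  Finpartition (Finset.univ : Finset (Fin a ⊕ Fin b))

/-- `Sum.elim f g` is constant on every block of `P`. -/
def Compatible {n a b : ℕ} (P : PartitionDiagram a b)
    (f : Fin a → Fin n) (g : Fin b → Fin n) : Prop :=
  ∀ B ∈ P.parts, ∀ x ∈ B, ∀ y ∈ B, Sum.elim f g x = Sum.elim f g y

/-- The linear map `T_P : V^{⊗a} → V^{⊗b}` associated to a partition diagram `P`,
where `V^{⊗a}` is modelled as the free module on `Fin a → Fin n`, with basis vector
at `f` corresponding to `e_{f(1)} ⊗ ⋯ ⊗ e_{f(a)}`. -/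
noncomputable def TP (k : Type*) [CommRing k] (n : ℕ) {a b : ℕ}
    (P : PartitionDiagram a b) :
    ((Fin a → Fin n) → k) →ₗ[k] ((Fin b → Fin n) → k) where
  toFun x g := ∑ f : Fin a → Fin n, if Compatible P f g then x f else 0
  map_add' x y := by
    funext g
    simp only [Pi.add_apply]
    rw [← Finset.sum_add_distrib]
    exact Finset.sum_congr rfl fun f _ => by split <;> simp
  map_smul' c x := by
    funext g
    simp only [Pi.smul_apply, smul_eq_mul, RingHom.id_apply]
    rw [Finset.mul_sum]
    exact Finset.sum_congr rfl fun f _ => by split <;> simp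

/-- The (diagonal) action of `σ ∈ S_n` on `V^{⊗a}`: on basis vectors it sends
`e_{f(1)} ⊗ ⋯ ⊗ e_{f(a)}` to `e_{σ(f(1))} ⊗ ⋯ ⊗ e_{σ(f(a))}`. -/
def permMap (k : Type*) [CommRing k] {n a : ℕ} (σ : Equiv.Perm (Fin n)) :
    ((Fin a → Fin n) → k) →ₗ[k] ((Fin a → Fin n) → k) where
  toFun x f := x fun i => σ⁻¹ (f i)
  map_add' _ _ := rfl
  map_smul' _ _ := rfl


/-- The canonical equivalence `(Fin (a+c) → Fin n) ≃ (Fin a → Fin n) × (Fin c → Fin n)`. -/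
def splitEquiv (n a c : ℕ) :
    (Fin (a + c) → Fin n) ≃ (Fin a → Fin n) × (Fin c → Fin n) :=
  (Equiv.arrowCongr finSumFinEquiv (Equiv.refl (Fin n))).symm.trans
    (Equiv.sumArrowEquivProdArrow _ _ _)

/-- The canonical isomorphism `V^{⊗(a+c)} ≅ V^{⊗a} ⊗ V^{⊗c}`, sending the basis vector
`e_f` to `e_{f ∘ castAdd} ⊗ e_{f ∘ natAdd}`. -/
noncomputable def splitLinear (k : Type*) [CommRing k] (n a c : ℕ) :
    ((Fin (a + c) → Fin n) → k) ≃ₗ[k]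
      TensorProduct k ((Fin a → Fin n) → k) ((Fin c → Fin n) → k) :=
  Module.Basis.equiv (Pi.basisFun k (Fin (a + c) → Fin n))
    ((Pi.basisFun k (Fin a → Fin n)).tensorProduct (Pi.basisFun k (Fin c → Fin n)))
    (splitEquiv n a c)


section Aux

variable {k : Type*} [CommRing k] {n a b c d : ℕ}

lemma splitEquiv_apply (F : Fin (a + c) → Fin n) :
    splitEquiv n a c F = (F ∘ Fin.castAdd c, F ∘ Fin.natAdd a) := by
  ext i <;> simp [splitEquiv, Equiv.sumArrowEquivProdArrow]

lemma TP_basis (P : PartitionDiagram a b) (f : Fin a → Fin n) :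
    TP k n P (Pi.basisFun k (Fin a → Fin n) f) =
      fun g => if Compatible P f g then (1 : k) else 0 := by
  funext g
  show (∑ f' : Fin a → Fin n, if Compatible P f' g then
      Pi.basisFun k (Fin a → Fin n) f f' else 0) = _
  rw [Finset.sum_eq_single f]
  · simp [Pi.basisFun_apply, Pi.single_apply]
  · intro f' _ hf'
    simp [Pi.basisFun_apply, Pi.single_apply, hf'.symm]
  · simp

lemma compat_iff (P : PartitionDiagram a b) (Q : PartitionDiagram c d)
    (R : PartitionDiagram (a + c) (b + d))
    (hR : R.parts =
      P.parts.image
        (fun B => B.image (Sum.map (Fin.castAdd c) (Fin.castAdd d))) ∪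
      Q.parts.image
        (fun B => B.image (Sum.map (Fin.natAdd a) (Fin.natAdd b))))
    (F : Fin (a + c) → Fin n) (G : Fin (b + d) → Fin n) :
    Compatible R F G ↔
      Compatible P (F ∘ Fin.castAdd c) (G ∘ Fin.castAdd d) ∧
      Compatible Q (F ∘ Fin.natAdd a) (G ∘ Fin.natAdd b) := by
  constructor
  · intro h
    constructor
    · intro B hB x hx y hy
      have hB' : B.image (Sum.map (Fin.castAdd c) (Fin.castAdd d)) ∈ R.parts := by
        rw [hR]
        exact Finset.mem_union_left _ (Finset.mem_image_of_mem _ hB)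
      have := h _ hB' _ (Finset.mem_image_of_mem _ hx) _ (Finset.mem_image_of_mem _ hy)
      cases x <;> cases y <;> simpa using this
    · intro B hB x hx y hy
      have hB' : B.image (Sum.map (Fin.natAdd a) (Fin.natAdd b)) ∈ R.parts := by
        rw [hR]
        exact Finset.mem_union_right _ (Finset.mem_image_of_mem _ hB)
      have := h _ hB' _ (Finset.mem_image_of_mem _ hx) _ (Finset.mem_image_of_mem _ hy)
      cases x <;> cases y <;> simpa using this
  · rintro ⟨h1, h2⟩ B hB x hx y hy
    rw [hR, Finset.mem_union] at hB
    rcases hB with hB | hB <;> obtain ⟨B0, hB0, rfl⟩ := Finset.mem_image.mp hB <;>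
      obtain ⟨x0, hx0, rfl⟩ := Finset.mem_image.mp hx <;>
      obtain ⟨y0, hy0, rfl⟩ := Finset.mem_image.mp hy
    · have := h1 _ hB0 _ hx0 _ hy0
      cases x0 <;> cases y0 <;> simpa using this
    · have := h2 _ hB0 _ hx0 _ hy0
      cases x0 <;> cases y0 <;> simpa using this

set_option synthInstance.maxHeartbeats 1000000 in
lemma splitLinear_apply (x : (Fin (a + c) → Fin n) → k) :
    splitLinear k n a c x = ∑ F : Fin (a + c) → Fin n,
      x F • (Pi.basisFun k (Fin a → Fin n) (F ∘ Fin.castAdd c) ⊗ₜ[k]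
        Pi.basisFun k (Fin c → Fin n) (F ∘ Fin.natAdd a)) := by
  have hx : x = ∑ F : Fin (a + c) → Fin n, x F • Pi.basisFun k _ F := by
    conv_lhs => rw [← (Pi.basisFun k (Fin (a + c) → Fin n)).sum_repr x]
    simp [Pi.basisFun_repr]
  conv_lhs => rw [hx]
  rw [map_sum]
  refine Finset.sum_congr rfl fun F _ => ?_
  rw [map_smul, splitLinear, Module.Basis.equiv_apply, splitEquiv_apply,
    Module.Basis.tensorProduct_apply]

end Aux

/-- `T_{P ⊗ Q} = T_P ⊗ T_Q` under the canonical isomorphisms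
`V^{⊗(a+c)} ≅ V^{⊗a} ⊗ V^{⊗c}` and `V^{⊗(b+d)} ≅ V^{⊗b} ⊗ V^{⊗d}`, where `P ⊗ Q`
is the horizontal juxtaposition of the partition diagrams `P` and `Q`. -/
theorem stmt6 (k : Type*) [CommRing k] (n : ℕ) (hn : 0 < n) (a b c d : ℕ)
    (P : PartitionDiagram a b) (Q : PartitionDiagram c d)
    (R : PartitionDiagram (a + c) (b + d))
    (hR : R.parts =
      P.parts.image
        (fun B => B.image (Sum.map (Fin.castAdd c) (Fin.castAdd d))) ∪
      Q.parts.image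
        (fun B => B.image (Sum.map (Fin.natAdd a) (Fin.natAdd b)))) :
    (splitLinear k n b d).toLinearMap ∘ₗ TP k n R =
      TensorProduct.map (TP k n P) (TP k n Q) ∘ₗ (splitLinear k n a c).toLinearMap := by
  apply (Pi.basisFun k (Fin (a + c) → Fin n)).ext
  intro F
  simp only [LinearMap.coe_comp, Function.comp_apply, LinearEquiv.coe_coe]
  rw [TP_basis, splitLinear_apply, splitLinear_apply]
  have hb : ∀ G : Fin (a + c) → Fin n,
      (Pi.basisFun k (Fin (a + c) → Fin n) F) G = if G = F then (1 : k) else 0 := by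
    intro G; simp [Pi.basisFun_apply, Pi.single_apply]
  rw [Finset.sum_eq_single F]
  · rw [hb F, if_pos rfl, one_smul, TensorProduct.map_tmul, TP_basis, TP_basis]
    have expand : ((fun g => if Compatible P (F ∘ Fin.castAdd c) g then (1:k) else 0) ⊗ₜ[k]
        (fun g => if Compatible Q (F ∘ Fin.natAdd a) g then (1:k) else 0)) =
        ∑ p : (Fin b → Fin n) × (Fin d → Fin n),
          ((if Compatible P (F ∘ Fin.castAdd c) p.1 then (1:k) else 0) *
           (if Compatible Q (F ∘ Fin.natAdd a) p.2 then (1:k) else 0)) •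
          (Pi.basisFun k (Fin b → Fin n) p.1 ⊗ₜ[k] Pi.basisFun k (Fin d → Fin n) p.2) := by
      have e1 : (fun g => if Compatible P (F ∘ Fin.castAdd c) g then (1:k) else 0) =
          ∑ g1 : Fin b → Fin n, (if Compatible P (F ∘ Fin.castAdd c) g1 then (1:k) else 0) •
            Pi.basisFun k (Fin b → Fin n) g1 := by
        funext g
        rw [Finset.sum_apply, Finset.sum_eq_single g]
        · simp [Pi.basisFun_apply]
        · intro f _ hf
          simp [Pi.basisFun_apply, Pi.single_apply, Ne.symm hf]
        · simp
      have e2 : (fun g => if Compatible Q (F ∘ Fin.natAdd a) g then (1:k) else 0) =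
          ∑ g2 : Fin d → Fin n, (if Compatible Q (F ∘ Fin.natAdd a) g2 then (1:k) else 0) •
            Pi.basisFun k (Fin d → Fin n) g2 := by
        funext g
        rw [Finset.sum_apply, Finset.sum_eq_single g]
        · simp [Pi.basisFun_apply]
        · intro f _ hf
          simp [Pi.basisFun_apply, Pi.single_apply, Ne.symm hf]
        · simp
      rw [← Finset.univ_product_univ, Finset.sum_product, e1, e2,
        TensorProduct.sum_tmul]
      refine Finset.sum_congr rfl fun g1 _ => ?_
      rw [TensorProduct.tmul_sum]
      refine Finset.sum_congr rfl fun g2 _ => ?_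
      simp only [TensorProduct.smul_tmul', TensorProduct.tmul_smul, smul_smul]
      rw [mul_comm]
    rw [expand]
    refine Fintype.sum_equiv (splitEquiv n b d) _ _ fun G => ?_
    rw [splitEquiv_apply]
    rw [compat_iff P Q R hR]
    by_cases h1 : Compatible P (F ∘ Fin.castAdd c) (G ∘ Fin.castAdd d) <;>
      by_cases h2 : Compatible Q (F ∘ Fin.natAdd a) (G ∘ Fin.natAdd b) <;>
      simp [h1, h2]
  · intro G _ hG
    rw [hb G, if_neg hG, zero_smul]
  · simp
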